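/- Let p be a prime, s ≥ 1, and let n, m be nonnegative integers with n ≥ m, and r an integer with 1 ≤ r ≤ p^s − 1 and p ∤ r. If additionally n ≥ m + 1, then C(n·p^s, m·p^s + r) / p^s ≡ (−1)^(r−1) · r⁻¹ · (m+1) · C(n, m+1) (mod p), where the left side is an integer. -/

import Mathlib

open Nat

section Aux
variable {p : ℕ} [Fact p.Prime]

lemma lucas_step (n k : ℕ) :
    ((n.choose k : ZMod p)) = (n % p).choose (k % p) * (n / p).choose (k / p) := by
  have := @Choose.choose_modEq_choose_mod_mul_choose_div n k p _
  rw [← ZMod.intCast_eq_intCast_iff] at this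
  push_cast at this
  exact this

lemma gen_lucas : ∀ (s A B c d : ℕ), c < p ^ s → d < p ^ s →
    ((A * p ^ s + c).choose (B * p ^ s + d) : ZMod p) = A.choose B * c.choose d := by
  intro s
  induction s with
  | zero =>
    intro A B c d hc hd
    simp only [pow_zero, Nat.lt_one_iff] at hc hd
    subst hc; subst hd; simp
  | succ s ih =>
    intro A B c d hc hd
    have hp0 : 0 < p := (Fact.out : p.Prime).pos
    rw [lucas_step]
    have e1 : (A * p ^ (s+1) + c) % p = c % p := by
      conv_lhs => rw [_root_.pow_succ', ← mul_assoc, mul_comm A p, mul_assoc, Nat.mul_add_mod]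
    have e2 : (A * p ^ (s+1) + c) / p = A * p ^ s + c / p := by
      conv_lhs => rw [_root_.pow_succ', ← mul_assoc, mul_comm A p, mul_assoc,
        Nat.mul_add_div hp0]
    have e3 : (B * p ^ (s+1) + d) % p = d % p := by
      conv_lhs => rw [_root_.pow_succ', ← mul_assoc, mul_comm B p, mul_assoc, Nat.mul_add_mod]
    have e4 : (B * p ^ (s+1) + d) / p = B * p ^ s + d / p := by
      conv_lhs => rw [_root_.pow_succ', ← mul_assoc, mul_comm B p, mul_assoc,
        Nat.mul_add_div hp0]
    rw [e1, e2, e3, e4, ih A B (c / p) (d / p)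
      (Nat.div_lt_of_lt_mul (by rwa [← _root_.pow_succ']))
      (Nat.div_lt_of_lt_mul (by rwa [← _root_.pow_succ'])),
      lucas_step (n := c) (k := d)]
    ring

lemma choose_p_sub_one (k : ℕ) (hk : k < p) :
    ((p - 1).choose k : ZMod p) = (-1) ^ k := by
  induction k with
  | zero => simp
  | succ k ih =>
    have hp0 : 0 < p := (Fact.out : p.Prime).pos
    have h1 : (p - 1).choose k + (p - 1).choose (k + 1) = p.choose (k + 1) := by
      conv_rhs => rw [show p = p - 1 + 1 by omega]
      rw [Nat.choose_succ_succ]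
    have h2 : (p : ℕ) ∣ p.choose (k + 1) :=
      (Fact.out : p.Prime).dvd_choose_self (Nat.succ_ne_zero k) hk
    have h3 : ((p.choose (k + 1) : ZMod p)) = 0 :=
      (ZMod.natCast_eq_zero_iff _ _).mpr h2
    have h4 : ((p - 1).choose k : ZMod p) + (p - 1).choose (k + 1) = 0 := by
      rw [← Nat.cast_add, h1, h3]
    rw [ih (lt_of_succ_lt hk)] at h4
    have h5 : ((p - 1).choose (k + 1) : ZMod p) = -(-1) ^ k := by linear_combination h4
    rw [h5, pow_succ]; ring

lemma choose_pow_sub_one : ∀ (s a : ℕ), a < p ^ s →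
    ((p ^ s - 1).choose a : ZMod p) = (-1) ^ a := by
  intro s
  induction s with
  | zero =>
    intro a ha
    simp only [pow_zero, Nat.lt_one_iff] at ha
    subst ha; simp
  | succ s ih =>
    intro a ha
    have hp0 : 0 < p := (Fact.out : p.Prime).pos
    have hps : 0 < p ^ s := Nat.pow_pos hp0
    have hdec : p ^ (s+1) - 1 = p * (p ^ s - 1) + (p - 1) := by
      have h1 : p * (p ^ s - 1) + p = p * p ^ s := by
        rw [← Nat.mul_succ]; congr 1; omega
      have h2 : p * p ^ s = p ^ (s + 1) := (_root_.pow_succ' p s).symm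
      omega
    rw [lucas_step]
    have e1 : (p ^ (s+1) - 1) % p = p - 1 := by
      rw [hdec, Nat.mul_add_mod, Nat.mod_eq_of_lt (by omega)]
    have e2 : (p ^ (s+1) - 1) / p = p ^ s - 1 := by
      rw [hdec, Nat.mul_add_div hp0, Nat.div_eq_of_lt (by omega), Nat.add_zero]
    rw [e1, e2, choose_p_sub_one (a % p) (Nat.mod_lt _ hp0),
      ih (a / p) (Nat.div_lt_of_lt_mul (by rwa [← _root_.pow_succ']))]
    have : (-1 : ZMod p) ^ a = ((-1) ^ p) ^ (a / p) * (-1) ^ (a % p) := by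
      rw [← pow_mul, ← pow_add, Nat.div_add_mod]
    rw [this, neg_one_pow_char (R := ZMod p) (p := p)]
    ring

end Aux

theorem stmt17 (p s n m r : ℕ) (hp : p.Prime) (hs : 1 ≤ s) (hmn : m ≤ n)
    (hr1 : 1 ≤ r) (hr2 : r ≤ p ^ s - 1) (hpr : ¬ p ∣ r) (hnm : m + 1 ≤ n)
    (rinv : ℤ) (hinv : (r : ℤ) * rinv ≡ 1 [ZMOD (p : ℤ)]) :
    p ^ s ∣ (n * p ^ s).choose (m * p ^ s + r) ∧
    (((n * p ^ s).choose (m * p ^ s + r) / p ^ s : ℕ) : ℤ) ≡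
      (-1) ^ (r - 1) * rinv * (m + 1) * (n.choose (m + 1)) [ZMOD (p : ℤ)] := by
  haveI : Fact p.Prime := ⟨hp⟩
  have hp0 : 0 < p := hp.pos
  have hps : 0 < p ^ s := Nat.pow_pos hp0
  have hrlt : r < p ^ s := by omega
  have hn1 : 1 ≤ n := le_trans (by omega) hnm
  -- key identity
  have key : n * p ^ s * (n * p ^ s - 1).choose (m * p ^ s + r - 1)
      = (n * p ^ s).choose (m * p ^ s + r) * (m * p ^ s + r) := by
    have h1 : 1 ≤ n * p ^ s := Nat.one_le_iff_ne_zero.mpr (by positivity)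
    have := Nat.add_one_mul_choose_eq (n * p ^ s - 1) (m * p ^ s + r - 1)
    have e1 : n * p ^ s - 1 + 1 = n * p ^ s := by omega
    have e2 : m * p ^ s + r - 1 + 1 = m * p ^ s + r := by omega
    rw [e1, e2] at this
    exact this
  -- coprimality
  have hcop : Nat.Coprime (p ^ s) (m * p ^ s + r) := by
    apply Nat.Coprime.pow_left
    rw [hp.coprime_iff_not_dvd]
    intro hd
    exact hpr ((Nat.dvd_add_right (Dvd.dvd.mul_left (dvd_pow_self p (by omega)) m)).mp hd)
  have hdvd : p ^ s ∣ (n * p ^ s).choose (m * p ^ s + r) := by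
    refine (Nat.Coprime.dvd_of_dvd_mul_right hcop ?_)
    rw [← key]
    exact (dvd_mul_left (p ^ s) n).mul_right _
  refine ⟨hdvd, ?_⟩
  obtain ⟨q, hq⟩ := hdvd
  have hqdiv : (n * p ^ s).choose (m * p ^ s + r) / p ^ s = q := by
    rw [hq]; exact Nat.mul_div_cancel_left q hps
  rw [hqdiv]
  -- cancel p^s in key identity
  have key2 : n * (n * p ^ s - 1).choose (m * p ^ s + r - 1) = q * (m * p ^ s + r) := by
    have : p ^ s * (n * (n * p ^ s - 1).choose (m * p ^ s + r - 1))
        = p ^ s * (q * (m * p ^ s + r)) := by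
      calc p ^ s * (n * (n * p ^ s - 1).choose (m * p ^ s + r - 1))
          = n * p ^ s * (n * p ^ s - 1).choose (m * p ^ s + r - 1) := by ring
        _ = (n * p ^ s).choose (m * p ^ s + r) * (m * p ^ s + r) := key
        _ = p ^ s * q * (m * p ^ s + r) := by rw [hq]
        _ = p ^ s * (q * (m * p ^ s + r)) := by ring
    exact Nat.eq_of_mul_eq_mul_left hps this
  -- pass to ZMod p
  have hZ : (n : ZMod p) * ((n * p ^ s - 1).choose (m * p ^ s + r - 1) : ZMod p)
      = (q : ZMod p) * (r : ZMod p) := by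
    have := congrArg (Nat.cast : ℕ → ZMod p) key2
    push_cast at this
    have hps0 : ((p : ZMod p)) = 0 := by
      exact_mod_cast (ZMod.natCast_eq_zero_iff p p).mpr dvd_rfl
    rw [hps0] at this
    have hsz : (0 : ZMod p) ^ s = 0 := zero_pow (by omega)
    rw [hsz] at this
    simpa using this
  -- evaluate the choose mod p by Lucas
  have hdecn : n * p ^ s - 1 = (n - 1) * p ^ s + (p ^ s - 1) := by
    have : 1 * p ^ s ≤ n * p ^ s := Nat.mul_le_mul_right _ hn1
    have h2 : (n - 1) * p ^ s = n * p ^ s - p ^ s := by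
      rw [Nat.sub_mul, one_mul]
    omega
  have hdeck : m * p ^ s + r - 1 = m * p ^ s + (r - 1) := by omega
  have hC' : ((n * p ^ s - 1).choose (m * p ^ s + r - 1) : ZMod p)
      = ((n - 1).choose m : ZMod p) * (-1) ^ (r - 1) := by
    rw [hdecn, hdeck, gen_lucas s (n - 1) m (p ^ s - 1) (r - 1) (by omega) (by omega),
      choose_pow_sub_one s (r - 1) (by omega)]
  -- n * choose (n-1) m = choose n (m+1) * (m+1)
  have hid : n * (n - 1).choose m = n.choose (m + 1) * (m + 1) := by
    have := Nat.add_one_mul_choose_eq (n - 1) m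
    have e1 : n - 1 + 1 = n := by omega
    rw [e1] at this
    exact this
  have hidZ : (n : ZMod p) * ((n - 1).choose m : ZMod p)
      = (n.choose (m + 1) : ZMod p) * ((m : ZMod p) + 1) := by
    have := congrArg (Nat.cast : ℕ → ZMod p) hid
    push_cast at this
    exact this
  -- rinv in ZMod p
  have hinvZ : (r : ZMod p) * (rinv : ZMod p) = 1 := by
    have := (ZMod.intCast_eq_intCast_iff _ _ _).mpr hinv
    push_cast at this
    exact_mod_cast this
  -- conclude
  rw [← ZMod.intCast_eq_intCast_iff]
  push_cast
  have : (q : ZMod p) = (q : ZMod p) * ((r : ZMod p) * (rinv : ZMod p)) := by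
    rw [hinvZ, mul_one]
  rw [this]
  have hqr : (q : ZMod p) * (r : ZMod p)
      = (-1) ^ (r - 1) * ((m : ZMod p) + 1) * (n.choose (m + 1) : ZMod p) := by
    linear_combination (-1 : ZMod p) * hZ + (n : ZMod p) * hC' + (-1 : ZMod p) ^ (r - 1) * hidZ
  calc (q : ZMod p) * ((r : ZMod p) * (rinv : ZMod p))
      = ((q : ZMod p) * (r : ZMod p)) * (rinv : ZMod p) := by ring
    _ = (-1) ^ (r - 1) * (rinv : ZMod p) * ((m : ZMod p) + 1) * (n.choose (m + 1) : ZMod p) := by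
        rw [hqr]; ring
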